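/- Let m > 0. The function φ(τ) = 2τ(m−τ)² · [τ(−m²+2m+3) + m²+6m+6] / (m²(m²+6m+6)(1+τ)) is non-negative on [0, m], vanishes at τ = 0 and τ = m, and satisfies φ(τ) > 0 for τ ∈ (0, m), if and only if m ≤ k₂, where k₂ is the unique positive real root of m³ − 3m² − 9m − 6. Moreover φ′(0) = 2 and φ′(m) = 0. -/

import Mathlib

/-- The momentum profile of the complete extremal metric on `X ∖ S_∞`. -/
noncomputable def phiProfile (m τ : ℝ) : ℝ :=
  2 * τ * (m - τ) ^ 2 * (τ * (-m ^ 2 + 2 * m + 3) + m ^ 2 + 6 * m + 6) /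
    (m ^ 2 * (m ^ 2 + 6 * m + 6) * (1 + τ))

lemma cubic_cont : Continuous fun x : ℝ => x ^ 3 - 3 * x ^ 2 - 9 * x - 6 :=
  (((continuous_pow 3).sub (continuous_const.mul (continuous_pow 2))).sub
    (continuous_const.mul continuous_id)).sub continuous_const

lemma cubic_le_iff (m k₂ : ℝ) (hm : 0 < m) (hk₂pos : 0 < k₂)
    (hk₂root : k₂ ^ 3 - 3 * k₂ ^ 2 - 9 * k₂ - 6 = 0)
    (hk₂uniq : ∀ x : ℝ, 0 < x → x ^ 3 - 3 * x ^ 2 - 9 * x - 6 = 0 → x = k₂) :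
    m ^ 3 - 3 * m ^ 2 - 9 * m - 6 ≤ 0 ↔ m ≤ k₂ := by
  constructor
  · intro h
    by_contra hlt
    push_neg at hlt
    rcases eq_or_lt_of_le h with he | hlt2
    · have := hk₂uniq m hm he
      linarith
    · have h6 : (0:ℝ) < (m + 6) ^ 3 - 3 * (m + 6) ^ 2 - 9 * (m + 6) - 6 := by nlinarith
      have hsub := intermediate_value_Icc (by linarith : m ≤ m + 6) cubic_cont.continuousOn
      have h0mem : (0:ℝ) ∈ Set.Icc (m ^ 3 - 3 * m ^ 2 - 9 * m - 6)
          ((m + 6) ^ 3 - 3 * (m + 6) ^ 2 - 9 * (m + 6) - 6) := ⟨le_of_lt hlt2, le_of_lt h6⟩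
      obtain ⟨x, hx, hfx⟩ := hsub h0mem
      have hxpos : 0 < x := lt_of_lt_of_le hm hx.1
      have := hk₂uniq x hxpos (by simpa using hfx)
      linarith [hx.1]
  · intro h
    by_contra hf
    push_neg at hf
    have hne : m ≠ k₂ := by
      intro he; rw [he] at hf; linarith
    have hmlt : m < k₂ := lt_of_le_of_ne h hne
    have hsub := intermediate_value_Icc hm.le cubic_cont.continuousOn
    have h0mem : (0:ℝ) ∈ Set.Icc ((0:ℝ) ^ 3 - 3 * 0 ^ 2 - 9 * 0 - 6)
        (m ^ 3 - 3 * m ^ 2 - 9 * m - 6) := by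
      constructor
      · norm_num
      · linarith
    obtain ⟨x, hx, hfx⟩ := hsub h0mem
    have hxpos : 0 < x := by
      rcases eq_or_lt_of_le hx.1 with he | hlt
      · exfalso; rw [← he] at hfx; norm_num at hfx
      · exact hlt
    have := hk₂uniq x hxpos (by simpa using hfx)
    linarith [hx.2]

/-- the profile `φ` is non-negative on `[0,m]`, vanishes at the
endpoints, and is positive on `(0,m)`, if and only if `m ≤ k₂`, the unique
positive root of `m³ − 3m² − 9m − 6`; moreover `φ′(0) = 2` and `φ′(m) = 0`. -/
theorem stmt_16 (m : ℝ) (hm : 0 < m) (k₂ : ℝ) (hk₂pos : 0 < k₂)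
    (hk₂root : k₂ ^ 3 - 3 * k₂ ^ 2 - 9 * k₂ - 6 = 0)
    (hk₂uniq : ∀ x : ℝ, 0 < x → x ^ 3 - 3 * x ^ 2 - 9 * x - 6 = 0 → x = k₂) :
    (((∀ τ ∈ Set.Icc (0 : ℝ) m, 0 ≤ phiProfile m τ) ∧
        phiProfile m 0 = 0 ∧ phiProfile m m = 0 ∧
        ∀ τ ∈ Set.Ioo (0 : ℝ) m, 0 < phiProfile m τ) ↔ m ≤ k₂) ∧
    HasDerivAt (phiProfile m) 2 0 ∧ HasDerivAt (phiProfile m) 0 m := by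
  have hc : (0:ℝ) < m ^ 2 + 6 * m + 6 := by nlinarith
  have hC : (0:ℝ) < m ^ 2 * (m ^ 2 + 6 * m + 6) := by positivity
  -- generic derivative computation: derivative v characterized by a polynomial identity
  have hderiv : ∀ τ₀ : ℝ, 0 ≤ τ₀ → ∃ v : ℝ, HasDerivAt (phiProfile m) v τ₀ ∧
      v * (m ^ 2 * (m ^ 2 + 6 * m + 6) * (1 + τ₀)) ^ 2 =
        ((2 * (m - τ₀) ^ 2 - 4 * τ₀ * (m - τ₀)) *
            (τ₀ * (-m ^ 2 + 2 * m + 3) + m ^ 2 + 6 * m + 6) +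
          2 * τ₀ * (m - τ₀) ^ 2 * (-m ^ 2 + 2 * m + 3)) *
            (m ^ 2 * (m ^ 2 + 6 * m + 6) * (1 + τ₀)) -
          2 * τ₀ * (m - τ₀) ^ 2 * (τ₀ * (-m ^ 2 + 2 * m + 3) + m ^ 2 + 6 * m + 6) *
            (m ^ 2 * (m ^ 2 + 6 * m + 6)) := by
    intro τ₀ hτ₀
    have hden0 : m ^ 2 * (m ^ 2 + 6 * m + 6) * (1 + τ₀) ≠ 0 := by positivity
    have h1 : HasDerivAt (fun τ : ℝ => 2 * τ) 2 τ₀ := by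
      simpa using (hasDerivAt_id τ₀).const_mul 2
    have h2 : HasDerivAt (fun τ : ℝ => (m - τ) ^ 2) (2 * (m - τ₀) * (-1)) τ₀ := by
      have := ((hasDerivAt_id τ₀).const_sub m).pow 2
      simp at this ⊢
      exact this
    have h3 : HasDerivAt (fun τ : ℝ => τ * (-m ^ 2 + 2 * m + 3) + m ^ 2 + 6 * m + 6)
        (-m ^ 2 + 2 * m + 3) τ₀ := by
      have h3' : HasDerivAt (fun τ : ℝ => τ * (-m ^ 2 + 2 * m + 3) + (m ^ 2 + 6 * m + 6))
          (-m ^ 2 + 2 * m + 3) τ₀ := by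
        simpa using ((hasDerivAt_id τ₀).mul_const (-m ^ 2 + 2 * m + 3)).add_const
          (m ^ 2 + 6 * m + 6)
      convert h3' using 2
      ring
    have hden : HasDerivAt (fun τ : ℝ => m ^ 2 * (m ^ 2 + 6 * m + 6) * (1 + τ))
        (m ^ 2 * (m ^ 2 + 6 * m + 6)) τ₀ := by
      simpa using ((hasDerivAt_id τ₀).const_add 1).const_mul (m ^ 2 * (m ^ 2 + 6 * m + 6))
    have hnum := (h1.mul h2).mul h3
    have hdiv := hnum.div hden hden0
    exact ⟨_, hdiv, by rw [div_mul_cancel₀ _ (pow_ne_zero 2 hden0)]; simp only [Pi.mul_apply]; ring⟩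
  refine ⟨?_, ?_, ?_⟩
  · -- the iff
    rw [← cubic_le_iff m k₂ hm hk₂pos hk₂root hk₂uniq]
    constructor
    · rintro ⟨-, -, -, hpos⟩
      by_contra hf
      push_neg at hf
      obtain ⟨A, hA_def⟩ : ∃ A : ℝ, A = m ^ 2 - 2 * m - 3 := ⟨_, rfl⟩
      have hLm : m * (-A) + (m ^ 2 + 6 * m + 6) < 0 := by
        rw [hA_def]; nlinarith
      have hA : 0 < A := by nlinarith
      have hmA : 0 < m * A - (m ^ 2 + 6 * m + 6) := by nlinarith
      obtain ⟨δ, hδ_def⟩ : ∃ δ : ℝ, δ = min (m / 2) ((m * A - (m ^ 2 + 6 * m + 6)) / (2 * A)) := ⟨_, rfl⟩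
      have hδpos : 0 < δ := hδ_def ▸ lt_min (by linarith) (by positivity)
      have hδle : δ ≤ m / 2 := hδ_def ▸ min_le_left _ _
      have hδle2 : δ * A ≤ (m * A - (m ^ 2 + 6 * m + 6)) / 2 := by
        have h : δ ≤ (m * A - (m ^ 2 + 6 * m + 6)) / (2 * A) :=
          hδ_def ▸ min_le_right (m / 2) ((m * A - (m ^ 2 + 6 * m + 6)) / (2 * A))
        calc δ * A ≤ (m * A - (m ^ 2 + 6 * m + 6)) / (2 * A) * A :=
              mul_le_mul_of_nonneg_right h hA.le
          _ = (m * A - (m ^ 2 + 6 * m + 6)) / 2 := by field_simp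
      obtain ⟨τ₀, hτ₀_def⟩ : ∃ τ₀ : ℝ, τ₀ = m - δ := ⟨_, rfl⟩
      have hτ₀pos : 0 < τ₀ := by rw [hτ₀_def]; linarith
      have hτ₀lt : τ₀ < m := by rw [hτ₀_def]; linarith
      have hL0 : τ₀ * (-m ^ 2 + 2 * m + 3) + m ^ 2 + 6 * m + 6 < 0 := by
        have hkey : τ₀ * (-m ^ 2 + 2 * m + 3) + m ^ 2 + 6 * m + 6
            = (m * (-A) + (m ^ 2 + 6 * m + 6)) + δ * A := by
          rw [hτ₀_def, hA_def]; ring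
        have hneg : m * -A = -(m * A) := by ring
        rw [hkey]; linarith
      have hphi := hpos τ₀ ⟨hτ₀pos, hτ₀lt⟩
      have hdenpos : 0 < m ^ 2 * (m ^ 2 + 6 * m + 6) * (1 + τ₀) := by positivity
      rw [phiProfile] at hphi
      have hnumpos : 0 < 2 * τ₀ * (m - τ₀) ^ 2 *
          (τ₀ * (-m ^ 2 + 2 * m + 3) + m ^ 2 + 6 * m + 6) := by
        rcases div_pos_iff.mp hphi with ⟨h1, _⟩ | ⟨_, h2⟩
        · exact h1
        · linarith
      have hP : 0 < 2 * τ₀ * (m - τ₀) ^ 2 :=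
        mul_pos (by linarith) (pow_pos (by linarith) 2)
      nlinarith [mul_neg_of_pos_of_neg hP hL0]
    · intro hf
      have hL : ∀ τ : ℝ, 0 ≤ τ → τ ≤ m →
          0 ≤ τ * (-m ^ 2 + 2 * m + 3) + m ^ 2 + 6 * m + 6 := by
        intro τ h1 h2
        nlinarith [mul_nonneg (by linarith : (0:ℝ) ≤ m - τ) hc.le,
          mul_nonneg h1 (by linarith : (0:ℝ) ≤ -(m ^ 3 - 3 * m ^ 2 - 9 * m - 6))]
      have hLs : ∀ τ : ℝ, 0 < τ → τ < m →
          0 < τ * (-m ^ 2 + 2 * m + 3) + m ^ 2 + 6 * m + 6 := by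
        intro τ h1 h2
        nlinarith [mul_pos (by linarith : (0:ℝ) < m - τ) hc,
          mul_nonneg h1.le (by linarith : (0:ℝ) ≤ -(m ^ 3 - 3 * m ^ 2 - 9 * m - 6))]
      refine ⟨?_, ?_, ?_, ?_⟩
      · rintro τ ⟨h1, h2⟩
        rw [phiProfile]
        apply div_nonneg
        · exact mul_nonneg (mul_nonneg (by linarith) (sq_nonneg _)) (hL τ h1 h2)
        · positivity
      · simp [phiProfile]
      · simp [phiProfile]
      · rintro τ ⟨h1, h2⟩
        rw [phiProfile]
        apply div_pos
        · exact mul_pos (mul_pos (by linarith) (pow_pos (by linarith) 2)) (hLs τ h1 h2)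
        · positivity
  · obtain ⟨v, hv, heq⟩ := hderiv 0 le_rfl
    have hD : (m ^ 2 * (m ^ 2 + 6 * m + 6) * (1 + 0)) ^ 2 ≠ 0 := by positivity
    have hveq : v = 2 := by
      apply mul_right_cancel₀ hD
      rw [heq]; ring
    exact hveq ▸ hv
  · obtain ⟨v, hv, heq⟩ := hderiv m hm.le
    have hD : (m ^ 2 * (m ^ 2 + 6 * m + 6) * (1 + m)) ^ 2 ≠ 0 := by positivity
    have hveq : v = 0 := by
      apply mul_right_cancel₀ hD
      rw [heq]; ring
    exact hveq ▸ hv
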